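/- Let n ≥ 1 and let ω_1, …, ω_n be complex numbers with nonzero imaginary parts, none lying on the real segment [0,1], and such that the 2n numbers ω_1, conj(ω_1), …, ω_n, conj(ω_n) are pairwise distinct. For each i set h^i(ω) = ∏_{j≠i} (ω − ω_j)(ω − conj(ω_j)). Then for every natural number m, the real integral ∫_0^1 x^m / ∏_{i=1}^n ((x − Re ω_i)² + (Im ω_i)²) dx equals Σ_{i=1}^n Im( g_m(ω_i) / h^i(ω_i) ) / Im(ω_i). -/

import Mathlib

open Complex Finset

/-- `g m ω = ω^m (Log(1 - 1/ω) + ∑_{k=1}^m 1/(k ω^k))`. -/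
noncomputable def g (m : ℕ) (ω : ℂ) : ℂ :=
  ω ^ m * (Complex.log (1 - 1 / ω) + ∑ k ∈ Finset.Icc 1 m, 1 / ((k : ℂ) * ω ^ k))

/-! ### Auxiliary lemmas -/

lemma partial_fraction {ι : Type*} [DecidableEq ι] (s : Finset ι) (hs : s.Nonempty)
    (v : ι → ℂ) (hv : Set.InjOn v s) (x : ℂ) (hx : ∀ j ∈ s, x ≠ v j) :
    (∏ j ∈ s, (x - v j))⁻¹ = ∑ i ∈ s, ((x - v i) * ∏ j ∈ s.erase i, (v i - v j))⁻¹ := by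
  have h1 := congrArg (Polynomial.eval x) (Lagrange.sum_basis hv hs)
  simp only [Polynomial.eval_finset_sum, Lagrange.basis, Polynomial.eval_prod,
    Lagrange.basisDivisor, Polynomial.eval_mul, Polynomial.eval_C, Polynomial.eval_sub,
    Polynomial.eval_X, Polynomial.eval_one] at h1
  have key : ∀ i ∈ s, ((x - v i) * ∏ j ∈ s.erase i, (v i - v j))⁻¹
      = (∏ j ∈ s, (x - v j))⁻¹ * ∏ j ∈ s.erase i, ((v i - v j)⁻¹ * (x - v j)) := by
    intro i hi
    have hne : ∏ j ∈ s.erase i, (x - v j) ≠ 0 := by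
      rw [Finset.prod_ne_zero_iff]
      exact fun j hj => sub_ne_zero_of_ne (hx j (Finset.mem_of_mem_erase hj))
    have e1 : ∏ j ∈ s.erase i, ((v i - v j)⁻¹ * (x - v j))
        = (∏ j ∈ s.erase i, (v i - v j))⁻¹ * ∏ j ∈ s.erase i, (x - v j) := by
      rw [Finset.prod_mul_distrib, Finset.prod_inv_distrib]
    rw [← Finset.mul_prod_erase s _ hi, e1, mul_inv, mul_inv, mul_mul_mul_comm,
      inv_mul_cancel₀ hne, mul_one]
  rw [Finset.sum_congr rfl key, ← Finset.mul_sum, h1, mul_one]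

lemma arg_add_mem {a b : ℂ} (ha : 0 < a.im) (hb : b.im < 0) :
    arg a + arg b ∈ Set.Ioc (-Real.pi) Real.pi := by
  have ha1 : 0 < arg a := lt_of_le_of_ne (arg_nonneg_iff.2 ha.le)
    (fun h => by have := Complex.arg_eq_zero_iff.1 h.symm; simp [this.2] at ha)
  have ha2 : arg a < Real.pi := lt_of_le_of_ne (arg_le_pi a)
    (fun h => by have := Complex.arg_eq_pi_iff.1 h; simp [this.2] at ha)
  have hb1 : arg b < 0 := arg_neg_iff.2 hb
  have hb2 : -Real.pi < arg b := neg_pi_lt_arg b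
  constructor <;> [linarith; linarith]

lemma log_one_sub_inv {ω : ℂ} (h : ω.im ≠ 0) :
    Complex.log (1 - 1 / ω) = Complex.log (1 - ω) - Complex.log (-ω) := by
  have hω0 : ω ≠ 0 := fun h0 => h (by simp [h0])
  have key : (1 - 1 / ω) * (-ω) = 1 - ω := by field_simp; ring
  have him1 : (1 - 1 / ω).im = ω.im / Complex.normSq ω := by
    rw [Complex.sub_im, Complex.one_im, one_div, Complex.inv_im]; ring
  have hns : 0 < Complex.normSq ω := Complex.normSq_pos.2 hω0
  have him1' : (1 - 1 / ω).im ≠ 0 := by rw [him1]; exact div_ne_zero h hns.ne'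
  have h1 : (1 - 1/ω) ≠ 0 := fun h0 => him1' (by rw [h0]; simp)
  have h2 : -ω ≠ 0 := neg_ne_zero.2 hω0
  have harg : arg (1 - 1/ω) + arg (-ω) ∈ Set.Ioc (-Real.pi) Real.pi := by
    rcases h.lt_or_gt with hlt | hlt
    · have := arg_add_mem (a := -ω) (b := 1 - 1/ω) (by simpa using hlt)
        (by rw [him1]; exact div_neg_of_neg_of_pos hlt hns)
      rw [add_comm]; exact this
    · exact arg_add_mem (by rw [him1]; exact div_pos hlt hns) (by simpa using hlt)
  have := Complex.log_mul h1 h2 harg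
  rw [key] at this
  rw [this]; ring

lemma cont_pow_div {ω : ℂ} (h : ω.im ≠ 0) (m : ℕ) :
    Continuous fun x : ℝ => (x : ℂ) ^ m / ((x : ℂ) - ω) := by
  apply Continuous.div
  · exact (Complex.continuous_ofReal.pow m)
  · exact Complex.continuous_ofReal.sub continuous_const
  · intro x
    refine sub_ne_zero_of_ne fun hx => h ?_
    rw [← hx]; simp

lemma integral_pow_div {ω : ℂ} (h : ω.im ≠ 0) (m : ℕ) :
    ∫ x in (0:ℝ)..1, (x : ℂ) ^ m / ((x : ℂ) - ω) = g m ω := by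
  have hω0 : ω ≠ 0 := fun h0 => h (by simp [h0])
  induction m with
  | zero =>
    have hne : ∀ x : ℝ, (x : ℂ) - ω ≠ 0 := by
      intro x
      refine sub_ne_zero_of_ne fun hx => h ?_
      rw [← hx]; simp
    have hd : ∀ x ∈ Set.uIcc (0:ℝ) 1,
        HasDerivAt (fun y : ℝ => Complex.log ((y:ℂ) - ω)) (((x:ℂ) - ω)⁻¹) x := by
      intro x _
      have hslit : (x : ℂ) - ω ∈ Complex.slitPlane := Or.inr (by simp [h])
      have h1 : HasDerivAt (fun z : ℂ => Complex.log (z - ω)) (((x:ℂ) - ω)⁻¹) (x:ℂ) := by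
        simpa [Function.comp_def] using (Complex.hasDerivAt_log hslit).comp (x:ℂ)
          ((hasDerivAt_id (x:ℂ)).sub_const ω)
      exact h1.comp_ofReal
    have hint : IntervalIntegrable (fun x : ℝ => ((x:ℂ) - ω)⁻¹) MeasureTheory.volume 0 1 := by
      apply Continuous.intervalIntegrable
      exact (Complex.continuous_ofReal.sub continuous_const).inv₀ hne
    have h0 := intervalIntegral.integral_eq_sub_of_hasDerivAt hd hint
    simp only [pow_zero, one_div]
    rw [h0, g, pow_zero, one_mul, show Finset.Icc 1 0 = (∅ : Finset ℕ) from rfl,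
      Finset.sum_empty, add_zero, log_one_sub_inv h]
    norm_num
  | succ m ih =>
    have hsplit : ∀ x : ℝ, (x:ℂ) ^ (m+1) / ((x:ℂ) - ω)
        = (x:ℂ) ^ m + ω * ((x:ℂ) ^ m / ((x:ℂ) - ω)) := by
      intro x
      have hne : (x : ℂ) - ω ≠ 0 := by
        refine sub_ne_zero_of_ne fun hx => h ?_
        rw [← hx]; simp
      field_simp
      ring
    rw [intervalIntegral.integral_congr (fun x _ => hsplit x)]
    rw [intervalIntegral.integral_add
      (by apply Continuous.intervalIntegrable; exact Complex.continuous_ofReal.pow m)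
      (by apply Continuous.intervalIntegrable; exact continuous_const.mul (cont_pow_div h m))]
    rw [intervalIntegral.integral_const_mul, ih]
    have hpow : ∫ x in (0:ℝ)..1, (x:ℂ) ^ m = 1 / (m + 1) := by
      have : ∀ x : ℝ, (x:ℂ) ^ m = ((x ^ m : ℝ) : ℂ) := by intro x; push_cast; ring
      rw [intervalIntegral.integral_congr (fun x _ => this x),
        intervalIntegral.integral_ofReal, integral_pow]
      push_cast; norm_num
    rw [hpow, g, g, Finset.sum_Icc_succ_top (by omega : 1 ≤ m + 1)]
    have hm1 : ((m:ℂ)+1) ≠ 0 := Nat.cast_add_one_ne_zero m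
    have hkey : ω^(m+1) * (1 / ((((m+1:ℕ)):ℂ) * ω^(m+1))) = 1/(((m+1:ℕ)):ℂ) := by
      push_cast
      field_simp
    push_cast at hkey ⊢
    linear_combination -hkey

lemma pair_sum (w : ℂ) (c : ℝ) :
    w / (((2 * c : ℝ) : ℂ) * Complex.I) + starRingEnd ℂ (w / (((2 * c : ℝ) : ℂ) * Complex.I))
      = ((w.im / c : ℝ) : ℂ) := by
  rw [Complex.add_conj]
  have hre : (w / (((2 * c : ℝ) : ℂ) * Complex.I)).re = w.im / (2 * c) := by
    rw [show (((2 * c : ℝ) : ℂ) * Complex.I) = Complex.I * ((2*c : ℝ) : ℂ) from mul_comm _ _,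
      ← div_div, Complex.div_ofReal_re, Complex.div_I]
    simp
  rw [hre]
  push_cast
  field_simp

lemma erase_inl {a b : Type*} [Fintype a] [Fintype b] [DecidableEq a] [DecidableEq b] (i : a) :
    (Finset.univ : Finset (a ⊕ b)).erase (Sum.inl i)
      = (Finset.univ.erase i).disjSum Finset.univ := by
  rw [← Finset.univ_disjSum_univ]
  ext (x | x) <;> simp [eq_comm]

lemma erase_inr {a b : Type*} [Fintype a] [Fintype b] [DecidableEq a] [DecidableEq b] (i : b) :
    (Finset.univ : Finset (a ⊕ b)).erase (Sum.inr i)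
      = Finset.univ.disjSum (Finset.univ.erase i) := by
  rw [← Finset.univ_disjSum_univ]
  ext (x | x) <;> simp [eq_comm]

lemma pointwise (n : ℕ) (hn : 1 ≤ n) (ω : Fin n → ℂ)
    (him : ∀ i, (ω i).im ≠ 0)
    (hinj : Function.Injective
      (Sum.elim ω (fun i => (starRingEnd ℂ) (ω i)) : Fin n ⊕ Fin n → ℂ))
    (m : ℕ) (x : ℝ) :
    (x ^ m / ∏ i, ((x - (ω i).re) ^ 2 + (ω i).im ^ 2) : ℝ)
      = ∑ i, ((x:ℂ) ^ m / ((x:ℂ) - ω i) / ∏ j ∈ Finset.univ.erase i,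
          ((ω i - ω j) * (ω i - starRingEnd ℂ (ω j)))).im / (ω i).im := by
  set α : Fin n ⊕ Fin n → ℂ := Sum.elim ω (fun i => starRingEnd ℂ (ω i)) with hα
  have him' : ∀ r, (α r).im ≠ 0 := by
    rintro (i | i) <;> simp [hα, him i]
  have hx : ∀ r ∈ (Finset.univ : Finset (Fin n ⊕ Fin n)), (x : ℂ) ≠ α r :=
    fun r _ hxr => him' r (by rw [← hxr]; simp)
  have hne : (Finset.univ : Finset (Fin n ⊕ Fin n)).Nonempty :=
    ⟨Sum.inl ⟨0, hn⟩, Finset.mem_univ _⟩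
  have pf := partial_fraction Finset.univ hne α hinj.injOn (x : ℂ) hx
  have pf2 : (x:ℂ)^m * (∏ r, ((x:ℂ) - α r))⁻¹
      = ∑ r, (x:ℂ)^m * (((x:ℂ) - α r) * ∏ s ∈ Finset.univ.erase r, (α r - α s))⁻¹ := by
    rw [pf, Finset.mul_sum]
  have fac : ∀ w : ℂ, ((x:ℂ) - w) * ((x:ℂ) - starRingEnd ℂ w)
      = (((x - w.re)^2 + w.im^2 : ℝ) : ℂ) := by
    intro w
    have h1 : (x:ℂ) - starRingEnd ℂ w = starRingEnd ℂ ((x:ℂ) - w) := by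
      rw [map_sub, Complex.conj_ofReal]
    rw [h1, Complex.mul_conj, Complex.normSq_apply]
    push_cast
    simp [Complex.sub_re, Complex.sub_im]
    ring
  have hprod : ∏ r, ((x:ℂ) - α r)
      = ((∏ i, ((x - (ω i).re)^2 + (ω i).im^2) : ℝ) : ℂ) := by
    rw [Fintype.prod_sum_type, Complex.ofReal_prod, ← Finset.prod_mul_distrib]
    exact (Finset.prod_congr rfl fun i _ => by rw [← fac (ω i)]; rfl).symm
  have eprod_l : ∀ i : Fin n, ∏ s ∈ Finset.univ.erase (Sum.inl i), (α (Sum.inl i) - α s)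
      = (((2 * (ω i).im : ℝ)) : ℂ) * Complex.I * ∏ j ∈ Finset.univ.erase i,
          ((ω i - ω j) * (ω i - starRingEnd ℂ (ω j))) := by
    intro i
    rw [erase_inl, Finset.prod_disjSum]
    have : ∏ j : Fin n, (α (Sum.inl i) - α (Sum.inr j))
        = (ω i - starRingEnd ℂ (ω i)) * ∏ j ∈ Finset.univ.erase i,
            (ω i - starRingEnd ℂ (ω j)) :=
      (Finset.mul_prod_erase Finset.univ _ (Finset.mem_univ i)).symm
    rw [this, Complex.sub_conj, Finset.prod_mul_distrib]
    simp only [hα, Sum.elim_inl]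
    ring
  have eprod_r : ∀ i : Fin n, ∏ s ∈ Finset.univ.erase (Sum.inr i), (α (Sum.inr i) - α s)
      = starRingEnd ℂ (∏ s ∈ Finset.univ.erase (Sum.inl i), (α (Sum.inl i) - α s)) := by
    intro i
    rw [erase_inl, erase_inr, Finset.prod_disjSum, Finset.prod_disjSum, map_mul,
      map_prod, map_prod]
    simp only [hα, Sum.elim_inl, Sum.elim_inr, map_sub, Complex.conj_conj]
    ring
  have hterm : ∀ i : Fin n,
      (x:ℂ)^m * (((x:ℂ) - α (Sum.inr i)) * ∏ s ∈ Finset.univ.erase (Sum.inr i),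
          (α (Sum.inr i) - α s))⁻¹
        = starRingEnd ℂ ((x:ℂ)^m * (((x:ℂ) - α (Sum.inl i)) *
            ∏ s ∈ Finset.univ.erase (Sum.inl i), (α (Sum.inl i) - α s))⁻¹) := by
    intro i
    rw [map_mul, map_inv₀, map_mul, map_sub, Complex.conj_ofReal, eprod_r]
    have : starRingEnd ℂ ((x:ℂ)^m) = (x:ℂ)^m := by
      rw [map_pow, Complex.conj_ofReal]
    rw [this]
    simp only [hα, Sum.elim_inl, Sum.elim_inr]
  have key : ((x ^ m / ∏ i, ((x - (ω i).re) ^ 2 + (ω i).im ^ 2) : ℝ) : ℂ)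
      = ((∑ i, ((x:ℂ) ^ m / ((x:ℂ) - ω i) / ∏ j ∈ Finset.univ.erase i,
          ((ω i - ω j) * (ω i - starRingEnd ℂ (ω j)))).im / (ω i).im : ℝ) : ℂ) := by
    rw [Complex.ofReal_div, Complex.ofReal_pow, ← hprod, div_eq_mul_inv, pf2,
      Fintype.sum_sum_type, Complex.ofReal_sum,
      ← Finset.sum_add_distrib]
    refine Finset.sum_congr rfl fun i _ => ?_
    rw [hterm i, eprod_l i]
    have harr : (x:ℂ)^m * (((x:ℂ) - α (Sum.inl i)) *
        ((((2 * (ω i).im : ℝ)) : ℂ) * Complex.I * ∏ j ∈ Finset.univ.erase i,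
          ((ω i - ω j) * (ω i - starRingEnd ℂ (ω j)))))⁻¹
        = ((x:ℂ) ^ m / ((x:ℂ) - ω i) / ∏ j ∈ Finset.univ.erase i,
            ((ω i - ω j) * (ω i - starRingEnd ℂ (ω j))))
          / ((((2 * (ω i).im : ℝ)) : ℂ) * Complex.I) := by
      simp only [hα, Sum.elim_inl]
      field_simp
    rw [harr]
    exact pair_sum _ _
  exact_mod_cast key

theorem integral_general_roots_closed_form
    (n : ℕ) (hn : 1 ≤ n) (ω : Fin n → ℂ)
    (him : ∀ i, (ω i).im ≠ 0)
    (hseg : ∀ i, ∀ x : ℝ, x ∈ Set.Icc (0 : ℝ) 1 → ω i ≠ (x : ℂ))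
    (hinj : Function.Injective
      (Sum.elim ω (fun i => (starRingEnd ℂ) (ω i)) : Fin n ⊕ Fin n → ℂ))
    (m : ℕ) :
    (∫ x in (0:ℝ)..1, x ^ m / ∏ i, ((x - (ω i).re) ^ 2 + (ω i).im ^ 2)) =
      ∑ i, (g m (ω i) / ∏ j ∈ Finset.univ.erase i,
        ((ω i - ω j) * (ω i - (starRingEnd ℂ) (ω j)))).im / (ω i).im := by
  have hpt := pointwise n hn ω him hinj m
  rw [intervalIntegral.integral_congr (fun x _ => hpt x)]
  rw [intervalIntegral.integral_finset_sum (fun i _ => by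
    apply Continuous.intervalIntegrable
    exact (Complex.continuous_im.comp ((cont_pow_div (him i) m).div_const _)).div_const _)]
  refine Finset.sum_congr rfl fun i _ => ?_
  set h : ℂ := ∏ j ∈ Finset.univ.erase i, ((ω i - ω j) * (ω i - starRingEnd ℂ (ω j))) with hh
  have hc : Continuous fun x : ℝ => (x:ℂ)^m / ((x:ℂ) - ω i) / h :=
    (cont_pow_div (him i) m).div_const _
  rw [intervalIntegral.integral_div]
  congr 1
  have him_swap : ∫ x in (0:ℝ)..1, ((x:ℂ)^m / ((x:ℂ) - ω i) / h).im
      = (∫ x in (0:ℝ)..1, (x:ℂ)^m / ((x:ℂ) - ω i) / h).im :=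
    Complex.imCLM.intervalIntegral_comp_comm (hc.intervalIntegrable 0 1)
  rw [him_swap, intervalIntegral.integral_div, integral_pow_div (him i) m]
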